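/- Let G be an infinite torsion subgroup of 𝕋 (every element of G has finite order). Then there exist an arithmetic sequence (a_n) and an arithmetic-type sequence (e_n) associated with (a_n) such that the ratio sequence (e_{n+1}/e_n) is bounded and G = t_{(e_n)}(𝕋). -/

import Mathlib

open Filter Topology

noncomputable section

/-- The circle group `𝕋 = ℝ/ℤ`. -/
abbrev Circle1 : Type := AddCircle (1 : ℝ)

/-- An arithmetic sequence `(a_n)_{n ≥ 1}`, with the convention `a 0 = 1`:
a strictly increasing sequence of positive integers with `1 < a 1` and `a n ∣ a (n+1)`. -/
def IsArithSeq (a : ℕ → ℕ) : Prop :=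
  a 0 = 1 ∧ StrictMono a ∧ ∀ n, a n ∣ a (n + 1)

/-- The ratio sequence: `q n = a n / a (n-1)` (so `q 1 = a 1`). -/
def ratioSeq (a : ℕ → ℕ) (n : ℕ) : ℕ := a n / a (n - 1)

/-- The subgroup of `𝕋` characterized by a sequence of integers `(u n)`. -/
def charSub (u : ℕ → ℕ) : Set Circle1 :=
  {x : Circle1 | Tendsto (fun n => (u n) • x) atTop (nhds 0)}

/-- The set `{r·a_{k-1} : k ≥ 1, 1 ≤ r ≤ q_k - 1}` whose increasing enumeration is `(d_n)`. -/
def DSet (a : ℕ → ℕ) : Set ℕ :=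
  {m | ∃ k, 1 ≤ k ∧ ∃ r, 1 ≤ r ∧ r ≤ ratioSeq a k - 1 ∧ m = r * a (k - 1)}

/-- `(d_n)` is the strictly increasing enumeration of `DSet a`. -/
def IsDSeq (a d : ℕ → ℕ) : Prop := StrictMono d ∧ Set.range d = DSet a

/-- An arithmetic-type sequence associated with the arithmetic sequence `(a_n)`:
a strictly increasing sequence of positive integers whose set of values contains all the
values `a k` (for `k ≥ 1`) and is contained in `DSet a`. -/
def IsArithTypeSeq (a e : ℕ → ℕ) : Prop :=
  StrictMono e ∧ (∀ k, 1 ≤ k → a k ∈ Set.range e) ∧ Set.range e ⊆ DSet a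

/-- `(c_n)_{n ≥ 1}` is the canonical representation of `x ∈ 𝕋` w.r.t. the arithmetic
sequence `(a_n)`: `0 ≤ c n ≤ q n - 1` for all `n ≥ 1`, `c n < q n - 1` infinitely often,
and `x = Σ_{n ≥ 1} c n / a n` in `𝕋`. -/
def IsCanonicalRep (a c : ℕ → ℕ) (x : Circle1) : Prop :=
  (∀ n, 1 ≤ n → c n ≤ ratioSeq a n - 1) ∧
  {n | 1 ≤ n ∧ c n < ratioSeq a n - 1}.Infinite ∧
  x = ((∑' n : ℕ, (c (n + 1) : ℝ) / (a (n + 1) : ℝ) : ℝ) : Circle1)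

/-- The support of a digit sequence: `supp(x) = {n ≥ 1 : c n ≠ 0}`. -/
def suppOf (c : ℕ → ℕ) : Set ℕ := {n | 1 ≤ n ∧ c n ≠ 0}

lemma coe_nsmul' (n : ℕ) (t : ℝ) : (n : ℕ) • ((t : Circle1)) = (((n : ℝ) * t : ℝ) : Circle1) := by
  rw [← AddCircle.coe_nsmul, nsmul_eq_mul]

lemma coe_zsmul' (n : ℤ) (t : ℝ) : (n : ℤ) • ((t : Circle1)) = (((n : ℝ) * t : ℝ) : Circle1) := by
  rw [← AddCircle.coe_zsmul, zsmul_eq_mul]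

lemma coe_int_zero (m : ℤ) : ((m : ℝ) : Circle1) = 0 := by
  rw [AddCircle.coe_eq_zero_iff]
  exact ⟨m, by simp⟩

/-- representative in [0,1) -/
lemma exists_rep (x : Circle1) : ∃ t : ℝ, t ∈ Set.Ico (0:ℝ) 1 ∧ (t : Circle1) = x := by
  obtain ⟨b, hb, hbx⟩ := AddCircle.eq_coe_Ico x
  exact ⟨b, hb, hbx⟩

/-- torsion kernel is finite -/
lemma ker_finite {n : ℕ} (hn : 1 ≤ n) : {x : Circle1 | n • x = 0}.Finite := by
  apply Set.Finite.subset (Set.finite_range (fun k : Fin n => (((k : ℝ) / n : ℝ) : Circle1)))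
  rintro x (hx : n • x = 0)
  obtain ⟨t, ⟨ht0, ht1⟩, rfl⟩ := exists_rep x
  rw [coe_nsmul', AddCircle.coe_eq_zero_iff] at hx
  obtain ⟨m, hm⟩ := hx
  rw [zsmul_eq_mul, mul_one] at hm
  have hn' : (0:ℝ) < n := by exact_mod_cast hn
  have hm0 : 0 ≤ m := by
    have : (0:ℝ) ≤ (m:ℝ) := hm ▸ by positivity
    exact_mod_cast this
  have hmn : m < n := by
    have : (m:ℝ) < n := by rw [hm]; calc (n:ℝ) * t < n * 1 := by nlinarith
                                                  _ = n := by ring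
    exact_mod_cast this
  refine ⟨⟨m.toNat, by omega⟩, ?_⟩
  simp only
  congr 1
  have : (m.toNat : ℝ) = (m : ℝ) := by exact_mod_cast Int.toNat_of_nonneg hm0
  rw [this, hm]
  field_simp

/-- elements killed by n are multiples of 1/n -/
lemma ker_sub_zmultiples {n : ℕ} (hn : 1 ≤ n) {x : Circle1} (hx : n • x = 0) :
    x ∈ AddSubgroup.zmultiples ((((n:ℝ)⁻¹ : ℝ)) : Circle1) := by
  obtain ⟨t, ⟨ht0, ht1⟩, rfl⟩ := exists_rep x
  rw [coe_nsmul', AddCircle.coe_eq_zero_iff] at hx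
  obtain ⟨m, hm⟩ := hx
  rw [zsmul_eq_mul, mul_one] at hm
  have hn' : ((n:ℝ)) ≠ 0 := by positivity
  refine ⟨m, ?_⟩
  show m • (((n:ℝ)⁻¹ : ℝ) : Circle1) = _
  rw [coe_zsmul']
  congr 1
  rw [hm]; field_simp

def oneDiv (n : ℕ) : Circle1 := (((n:ℝ)⁻¹ : ℝ) : Circle1)

lemma oneDiv_one : oneDiv 1 = 0 := by
  have : ((1:ℕ):ℝ)⁻¹ = ((1:ℤ) : ℝ) := by norm_num
  rw [oneDiv, this, coe_int_zero]

lemma oneDiv_mem_zmultiples {x : Circle1} (h : IsOfFinAddOrder x) :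
    oneDiv (addOrderOf x) ∈ AddSubgroup.zmultiples x := by
  set n := addOrderOf x with hn
  obtain ⟨m, hg, hl, he⟩ := AddCircle.exists_gcd_eq_one_of_isOfFinAddOrder h
  rcases eq_or_lt_of_le (Nat.one_le_iff_ne_zero.mpr h.addOrderOf_pos.ne') with h1 | h1
  · rw [hn, ← h1, oneDiv_one]; exact zero_mem _
  obtain ⟨s, -, hs⟩ := Nat.exists_mul_mod_eq_one_of_coprime hg h1
  refine ⟨(s : ℤ), ?_⟩
  show (s:ℤ) • x = oneDiv n
  rw [← he, coe_zsmul', oneDiv, Int.cast_natCast]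
  have hn0 : ((addOrderOf x : ℝ)) ≠ 0 := by positivity
  obtain ⟨q, hq⟩ : ∃ q, m * s = addOrderOf x * q + 1 := by
    refine ⟨m * s / addOrderOf x, ?_⟩
    conv_lhs => rw [← Nat.div_add_mod (m*s) (addOrderOf x)]
    rw [hs]
  have key : ((s:ℝ)) * ((m:ℝ) / (addOrderOf x : ℝ) * 1) =
      ((q : ℕ) : ℝ) + ((addOrderOf x : ℝ))⁻¹ := by
    field_simp
    rw [mul_comm (s:ℝ) (m:ℝ), ← Nat.cast_mul, hq]
    push_cast; ring
  rw [key, AddCircle.coe_add]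
  have hz : (((q : ℕ) : ℝ) : Circle1) = 0 := by
    rw [show ((q:ℕ):ℝ) = (((q:ℕ):ℤ):ℝ) by push_cast; ring]
    exact coe_int_zero _
  rw [hz, zero_add]

lemma oneDiv_lcm_mem {G : AddSubgroup Circle1} {m n : ℕ} (hm : 1 ≤ m) (hn : 1 ≤ n)
    (h1 : oneDiv m ∈ G) (h2 : oneDiv n ∈ G) : oneDiv (Nat.lcm m n) ∈ G := by
  set a := Nat.gcdA m n
  set b := Nat.gcdB m n
  have hm0 : ((m:ℝ)) ≠ 0 := by positivity
  have hn0 : ((n:ℝ)) ≠ 0 := by positivity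
  have hl0 : ((Nat.lcm m n : ℝ)) ≠ 0 := by
    have : 0 < Nat.lcm m n := Nat.lcm_pos hm hn
    positivity
  have hg : (Nat.gcd m n : ℝ) * (Nat.lcm m n : ℝ) = (m:ℝ) * n := by
    exact_mod_cast congrArg (fun k : ℕ => (k : ℝ)) (Nat.gcd_mul_lcm m n)
  have hab : ((Nat.gcd m n : ℕ) : ℝ) = (m:ℝ) * (a:ℝ) + (n:ℝ) * (b:ℝ) := by
    exact_mod_cast congrArg (fun k : ℤ => (k : ℝ)) (Nat.gcd_eq_gcd_ab m n)
  have key : ((Nat.lcm m n : ℝ))⁻¹ = (a:ℝ) * (n:ℝ)⁻¹ + (b:ℝ) * (m:ℝ)⁻¹ := by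
    field_simp
    nlinarith [hg, hab]
  have heq : oneDiv (Nat.lcm m n) = a • oneDiv n + b • oneDiv m := by
    rw [oneDiv, oneDiv, oneDiv, coe_zsmul', coe_zsmul', ← AddCircle.coe_add, key]
  rw [heq]
  exact add_mem (zsmul_mem h2 a) (zsmul_mem h1 b)

/-- representative with |t| = norm -/
lemma exists_rep_norm (y : Circle1) : ∃ t : ℝ, |t| ≤ 1/2 ∧ (t : Circle1) = y ∧ ‖y‖ = |t| := by
  obtain ⟨t0, ⟨h0, h1⟩, rfl⟩ := exists_rep y
  rcases le_or_gt t0 (1/2) with h | h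
  · exact ⟨t0, by rw [abs_of_nonneg h0]; exact h, rfl,
      ((AddCircle.norm_coe_eq_abs_iff (p := 1) (by norm_num)).mpr
        (by rw [abs_of_nonneg h0, abs_one]; linarith))⟩
  · refine ⟨t0 - 1, ?_, ?_, ?_⟩
    · rw [abs_of_nonpos (by linarith)]; linarith
    · have := AddCircle.coe_add_period 1 (t0 - 1)
      rw [sub_add_cancel] at this
      exact this.symm
    · have hc : ((t0 - 1 : ℝ) : Circle1) = (t0 : Circle1) := by
        have := AddCircle.coe_add_period 1 (t0 - 1)
        rw [sub_add_cancel] at this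
        exact this.symm
      rw [← hc]
      exact (AddCircle.norm_coe_eq_abs_iff (p := 1) (by norm_num)).mpr
        (by rw [abs_one, abs_of_nonpos (show t0 - 1 ≤ 0 by linarith)]; linarith)

/-- if all multiples r•y for 1 ≤ r ≤ Q are < 1/8 in norm then ‖Q•y‖ = Q * ‖y‖ -/
lemma norm_nsmul_eq {y : Circle1} {Q : ℕ} (hQ : 1 ≤ Q)
    (h : ∀ r : ℕ, 1 ≤ r → r ≤ Q → ‖(r • y : Circle1)‖ < 1/8) :
    ‖(Q • y : Circle1)‖ = (Q : ℝ) * ‖y‖ := by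
  obtain ⟨t, ht2, rfl, hnorm⟩ := exists_rep_norm y
  have key : ∀ r : ℕ, 1 ≤ r → r ≤ Q → (r : ℝ) * |t| < 1/8 := by
    intro r hr1
    induction r with
    | zero => omega
    | succ r ih =>
      intro hrQ
      rcases Nat.eq_zero_or_pos r with rfl | hr
      · have h1' := h 1 le_rfl hQ
        rw [one_nsmul, hnorm] at h1'
        norm_num
        linarith
      · have hrlt := ih hr (by omega)
        have hr1' : (1:ℝ) ≤ (r:ℝ) := by exact_mod_cast hr
        have htsmall : |t| < 1/8 := by nlinarith [abs_nonneg t, hrlt]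
        have habs : |((r+1 : ℕ) : ℝ) * t| ≤ 1/2 := by
          rw [abs_mul, abs_of_nonneg (by positivity : (0:ℝ) ≤ ((r+1:ℕ):ℝ))]
          push_cast
          push_cast at hrlt
          nlinarith [abs_nonneg t]
        have : ‖(((r+1:ℕ)) • ((t:Circle1)) : Circle1)‖ = |((r+1:ℕ):ℝ) * t| := by
          rw [coe_nsmul']
          exact (AddCircle.norm_coe_eq_abs_iff (p := 1) (by norm_num)).mpr
            (by rw [abs_one]; linarith)
        have h8 := h (r+1) (by omega) hrQ
        rw [this, abs_mul, abs_of_nonneg (by positivity : (0:ℝ) ≤ ((r+1:ℕ):ℝ))] at h8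
        exact h8
  have hQlt := key Q hQ le_rfl
  have habs : |(Q:ℝ) * t| ≤ 1/2 := by
    rw [abs_mul, abs_of_nonneg (by positivity : (0:ℝ) ≤ (Q:ℝ))]
    linarith
  rw [coe_nsmul', hnorm,
    (AddCircle.norm_coe_eq_abs_iff (p := 1) (by norm_num)).mpr (by rw [abs_one]; linarith),
    abs_mul, abs_of_nonneg (by positivity : (0:ℝ) ≤ (Q:ℝ))]

section DSetFacts

variable {a : ℕ → ℕ} (ha : IsArithSeq a)
include ha

lemma a_pos : ∀ n, 0 < a n := by
  intro n
  have h0 : a 0 ≤ a n := ha.2.1.monotone (Nat.zero_le n)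
  have h1 := ha.1
  omega

lemma a_dvd_of_le : ∀ {i j : ℕ}, i ≤ j → a i ∣ a j := by
  intro i j hij
  induction j with
  | zero => rw [Nat.le_zero.mp hij]
  | succ j ihj =>
    rcases Nat.lt_or_ge i (j+1) with h | h
    · exact (ihj (by omega)).trans (ha.2.2 j)
    · rw [Nat.le_antisymm hij h]

lemma ratio_mul (k : ℕ) (hk : 1 ≤ k) : a k = ratioSeq a k * a (k - 1) := by
  obtain ⟨c, hc⟩ := a_dvd_of_le ha (show k - 1 ≤ k by omega)
  rw [ratioSeq, hc, Nat.mul_div_cancel_left c (a_pos ha _), mul_comm]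

lemma ratio_ge_two (k : ℕ) (hk : 1 ≤ k) : 2 ≤ ratioSeq a k := by
  have h1 := ratio_mul ha k hk
  have h2 : a (k - 1) < a k := ha.2.1 (by omega)
  have h3 := a_pos ha (k - 1)
  nlinarith

lemma a_mem_DSet (k : ℕ) : a k ∈ DSet a := by
  refine ⟨k + 1, by omega, 1, le_rfl, ?_, by simp⟩
  have := ratio_ge_two ha (k+1) (by omega)
  omega

lemma DSet_infinite : (DSet a).Infinite := by
  apply Set.infinite_of_injective_forall_mem (f := a) ha.2.1.injective
  exact fun k => a_mem_DSet ha k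

lemma DSet_pos {m : ℕ} (hm : m ∈ DSet a) : 0 < m := by
  obtain ⟨k, hk, r, hr1, hr2, rfl⟩ := hm
  exact Nat.mul_pos (by omega) (a_pos ha _)

lemma DSet_lt {m : ℕ} (hm : m ∈ DSet a) :
    ∃ k, 1 ≤ k ∧ a (k-1) ≤ m ∧ m < a k ∧ a (k-1) ∣ m := by
  obtain ⟨k, hk, r, hr1, hr2, rfl⟩ := hm
  have hmul := ratio_mul ha k hk
  have hpos := a_pos ha (k-1)
  have h2 := ratio_ge_two ha k hk
  refine ⟨k, hk, Nat.le_mul_of_pos_left _ (by omega), ?_, dvd_mul_left (a (k-1)) r⟩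
  calc r * a (k-1) ≤ (ratioSeq a k - 1) * a (k-1) := Nat.mul_le_mul_right _ hr2
    _ < ratioSeq a k * a (k-1) := (Nat.mul_lt_mul_right hpos).mpr (by omega)
    _ = a k := hmul.symm

lemma DSet_dvd_of_le {m K : ℕ} (hm : m ∈ DSet a) (hK : a K ≤ m) : a K ∣ m := by
  obtain ⟨k, hk, hle, hlt, hdvd⟩ := DSet_lt ha hm
  have hKk : K < k := by
    by_contra hc
    push_neg at hc
    exact absurd (ha.2.1.monotone hc |>.trans hK) (by omega)
  exact (a_dvd_of_le ha (by omega : K ≤ k - 1)).trans hdvd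

lemma DSet_succ {m : ℕ} (hm : m ∈ DSet a) : ∃ m' ∈ DSet a, m < m' ∧ m' ≤ 2 * m := by
  obtain ⟨k, hk, r, hr1, hr2, rfl⟩ := hm
  have hpos := a_pos ha (k-1)
  have h2 := ratio_ge_two ha k hk
  rcases Nat.lt_or_ge r (ratioSeq a k - 1) with h | h
  · exact ⟨(r+1) * a (k-1), ⟨k, hk, r+1, by omega, by omega, rfl⟩,
      by nlinarith, by nlinarith⟩
  · have hr : r = ratioSeq a k - 1 := by omega
    refine ⟨a k, a_mem_DSet ha k, ?_, ?_⟩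
    · rw [ratio_mul ha k hk]
      subst hr
      exact (Nat.mul_lt_mul_right hpos).mpr (by omega)
    · rw [ratio_mul ha k hk]
      subst hr
      calc ratioSeq a k * a (k-1) ≤ (2 * (ratioSeq a k - 1)) * a (k-1) :=
            Nat.mul_le_mul_right _ (by omega)
        _ = 2 * ((ratioSeq a k - 1) * a (k-1)) := by ring

end DSetFacts

section Enum

variable {a : ℕ → ℕ} (ha : IsArithSeq a)
include ha

lemma setOf_DSet_infinite : {n | n ∈ DSet a}.Infinite := DSet_infinite ha

lemma e_strictMono : StrictMono (Nat.nth (· ∈ DSet a)) :=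
  Nat.nth_strictMono (setOf_DSet_infinite ha)

lemma e_range : Set.range (Nat.nth (· ∈ DSet a)) = DSet a :=
  Nat.range_nth_of_infinite (setOf_DSet_infinite ha)

lemma e_arithType : IsArithTypeSeq a (Nat.nth (· ∈ DSet a)) := by
  refine ⟨e_strictMono ha, ?_, (e_range ha).le⟩
  intro k _
  rw [e_range ha]
  exact a_mem_DSet ha k

lemma e_ratio : ∀ n, Nat.nth (· ∈ DSet a) (n+1) ≤ 2 * Nat.nth (· ∈ DSet a) n := by
  intro n
  have hmem : Nat.nth (· ∈ DSet a) n ∈ DSet a :=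
    Nat.nth_mem_of_infinite (setOf_DSet_infinite ha) n
  obtain ⟨m', hm', hlt, hle⟩ := DSet_succ ha hmem
  have : Nat.nth (· ∈ DSet a) (n+1) ≤ m' := by
    by_contra hc
    push_neg at hc
    exact absurd (Nat.le_nth_of_lt_nth_succ hc hm') (by omega)
  omega

end Enum

section CharSub

variable {a : ℕ → ℕ} (ha : IsArithSeq a)
include ha

lemma mem_charSub_of_ker {x : Circle1} {K : ℕ} (hK : a K • x = 0) :
    x ∈ charSub (Nat.nth (· ∈ DSet a)) := by
  have hev : ∀ᶠ n in atTop, (Nat.nth (· ∈ DSet a) n) • x = 0 := by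
    rw [eventually_atTop]
    refine ⟨a K, fun n hn => ?_⟩
    have h1 : a K ≤ Nat.nth (· ∈ DSet a) n :=
      hn.trans ((e_strictMono ha).le_apply)
    obtain ⟨c, hc⟩ := DSet_dvd_of_le ha
      (Nat.nth_mem_of_infinite (setOf_DSet_infinite ha) n) h1
    rw [hc, mul_comm, mul_smul, hK, smul_zero]
  exact (tendsto_const_nhds.congr' (hev.mono fun n h => h.symm) :)

lemma charSub_sub_ker {x : Circle1} (hx : x ∈ charSub (Nat.nth (· ∈ DSet a))) :
    ∃ K, a K • x = 0 := by
  by_contra hc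
  push_neg at hc
  have h8 : ∀ᶠ n in atTop, ‖(Nat.nth (· ∈ DSet a) n) • x‖ < 1/8 :=
    NormedAddCommGroup.tendsto_nhds_zero.mp hx (1/8) (by norm_num)
  obtain ⟨N, hN⟩ := eventually_atTop.mp h8
  -- every element of DSet that is ≥ e N has small norm action
  have hsmall : ∀ m ∈ DSet a, Nat.nth (· ∈ DSet a) N ≤ m → ‖m • x‖ < 1/8 := by
    intro m hm hle
    obtain ⟨j, rfl⟩ := (e_range ha) ▸ hm
    exact hN j ((Nat.nth_le_nth (setOf_DSet_infinite ha)).mp hle)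
  set eN := Nat.nth (· ∈ DSet a) N with heN
  -- a k ≥ eN for k ≥ eN
  have hak : ∀ k, eN ≤ k → eN ≤ a k := fun k hk => hk.trans (ha.2.1.le_apply)
  -- growth
  have hgrow : ∀ k, eN ≤ k → 2 * ‖a k • x‖ ≤ ‖a (k+1) • x‖ := by
    intro k hk
    have hQ2 : 2 ≤ ratioSeq a (k+1) := ratio_ge_two ha (k+1) (by omega)
    have hmul : a (k+1) = ratioSeq a (k+1) * a k := by
      have := ratio_mul ha (k+1) (by omega)
      simpa using this
    have hbig : ∀ r : ℕ, 1 ≤ r → r ≤ ratioSeq a (k+1) → ‖(r • (a k • x) : Circle1)‖ < 1/8 := by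
      intro r hr1 hr2
      rw [← mul_smul]
      rcases Nat.lt_or_ge r (ratioSeq a (k+1)) with h | h
      · apply hsmall _ ⟨k+1, by omega, r, hr1, by omega, by simp⟩
        calc eN ≤ a k := hak k hk
          _ ≤ r * a k := Nat.le_mul_of_pos_left _ (by omega)
      · have hrq : r = ratioSeq a (k+1) := by omega
        rw [hrq, ← hmul]
        exact hsmall _ (a_mem_DSet ha (k+1)) ((hak k hk).trans (ha.2.1.monotone (by omega)))
    have := norm_nsmul_eq (by omega : 1 ≤ ratioSeq a (k+1)) hbig
    rw [← mul_smul, ← hmul] at this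
    rw [this]
    have hpos : (0:ℝ) ≤ ‖a k • x‖ := norm_nonneg _
    have : (2:ℝ) ≤ (ratioSeq a (k+1) : ℝ) := by exact_mod_cast hQ2
    nlinarith
  -- iterate
  have hpos0 : 0 < ‖a eN • x‖ := norm_pos_iff.mpr (hc eN)
  have hlt : ∀ j : ℕ, ‖a (eN + j) • x‖ < 1/8 := by
    intro j
    exact hsmall _ (a_mem_DSet ha _) (hak _ (by omega))
  have hiter : ∀ j : ℕ, (2:ℝ)^j * ‖a eN • x‖ ≤ ‖a (eN + j) • x‖ := by
    intro j
    induction j with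
    | zero => simp
    | succ j ih =>
      have := hgrow (eN + j) (by omega)
      calc (2:ℝ)^(j+1) * ‖a eN • x‖ = 2 * ((2:ℝ)^j * ‖a eN • x‖) := by ring
        _ ≤ 2 * ‖a (eN + j) • x‖ := by linarith
        _ ≤ ‖a (eN + j + 1) • x‖ := this
        _ = ‖a (eN + (j+1)) • x‖ := by ring_nf
  obtain ⟨j, hj⟩ := pow_unbounded_of_one_lt ((1/8) / ‖a eN • x‖) (by norm_num : (1:ℝ) < 2)
  have h1 := hiter j
  have h2 := hlt j
  rw [div_lt_iff₀ hpos0] at hj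
  nlinarith [hiter j, hlt j]

end CharSub

lemma zmultiples_sub {G : AddSubgroup Circle1} {x : Circle1} (hx : x ∈ G) {y : Circle1}
    (hy : y ∈ AddSubgroup.zmultiples x) : y ∈ G := by
  obtain ⟨z, rfl⟩ := hy
  exact zsmul_mem hx z


/-- every infinite torsion subgroup of `𝕋` is characterized by an
arithmetic-type sequence with bounded ratio. -/
theorem torsion_subgroup_characterized (G : AddSubgroup Circle1)
    (hGinf : (G : Set Circle1).Infinite) (hGtor : ∀ x ∈ G, IsOfFinAddOrder x) :
    ∃ (a e : ℕ → ℕ), IsArithSeq a ∧ IsArithTypeSeq a e ∧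
      (∃ C : ℕ, ∀ n, e (n + 1) ≤ C * e n) ∧ (G : Set Circle1) = charSub e := by
  classical
  -- G is countable
  have hGc : (G : Set Circle1).Countable := by
    have hsub : (G : Set Circle1) ⊆ ⋃ n : ℕ, {x : Circle1 | (n+1) • x = 0} := by
      intro x hx
      have ho := (hGtor x hx).addOrderOf_pos
      refine Set.mem_iUnion.mpr ⟨addOrderOf x - 1, ?_⟩
      show (addOrderOf x - 1 + 1) • x = 0
      rw [show addOrderOf x - 1 + 1 = addOrderOf x by omega]
      exact addOrderOf_nsmul_eq_zero x
    exact Set.Countable.mono hsub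
      (Set.countable_iUnion fun n => (ker_finite (by omega)).countable)
  obtain ⟨g, hg⟩ := hGc.exists_eq_range hGinf.nonempty
  have hgG : ∀ n, g n ∈ G := by
    intro n
    have : g n ∈ (G : Set Circle1) := by rw [hg]; exact ⟨n, rfl⟩
    exact this
  -- picking elements not killed by m
  have hpick : ∀ m : ℕ, ∃ y, y ∈ G ∧ (1 ≤ m → ¬ (m • y = 0)) := by
    intro m
    rcases Nat.lt_or_ge m 1 with h | h
    · exact ⟨0, zero_mem _, by omega⟩
    · by_contra hcon
      push_neg at hcon
      apply hGinf
      apply Set.Finite.subset (ker_finite h)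
      intro y hy
      exact (hcon y hy).2
  choose Y hYG hY using hpick
  -- the arithmetic sequence
  set a : ℕ → ℕ := fun n => Nat.rec (motive := fun _ => ℕ) 1
    (fun n an => Nat.lcm an (Nat.lcm (addOrderOf (g n)) (addOrderOf (Y an)))) n with ha_def
  have ha0 : a 0 = 1 := rfl
  have haS : ∀ n, a (n+1) = Nat.lcm (a n) (Nat.lcm (addOrderOf (g n)) (addOrderOf (Y (a n)))) :=
    fun n => rfl
  -- basic positivity and membership
  have hmain : ∀ n, 0 < a n ∧ oneDiv (a n) ∈ G := by
    intro n
    induction n with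
    | zero => exact ⟨by omega, by rw [ha0, oneDiv_one]; exact zero_mem _⟩
    | succ n ih =>
      obtain ⟨hpos, hmem⟩ := ih
      have hog : 0 < addOrderOf (g n) := (hGtor _ (hgG n)).addOrderOf_pos
      have hoY : 0 < addOrderOf (Y (a n)) := (hGtor _ (hYG (a n))).addOrderOf_pos
      have h1 : oneDiv (addOrderOf (g n)) ∈ G :=
        zmultiples_sub (hgG n) (oneDiv_mem_zmultiples (hGtor _ (hgG n)))
      have h2 : oneDiv (addOrderOf (Y (a n))) ∈ G :=
        zmultiples_sub (hYG (a n)) (oneDiv_mem_zmultiples (hGtor _ (hYG (a n))))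
      have hl : 0 < Nat.lcm (addOrderOf (g n)) (addOrderOf (Y (a n))) := Nat.lcm_pos hog hoY
      refine ⟨?_, ?_⟩
      · rw [haS n]; exact Nat.lcm_pos hpos hl
      · rw [haS n]
        exact oneDiv_lcm_mem hpos hl hmem (oneDiv_lcm_mem hog hoY h1 h2)
  -- strict monotonicity
  have hdvd : ∀ n, a n ∣ a (n+1) := by
    intro n
    rw [haS n]
    exact Nat.dvd_lcm_left _ _
  have hlt : ∀ n, a n < a (n+1) := by
    intro n
    have hpos := (hmain n).1
    have hposS := (hmain (n+1)).1
    refine Nat.lt_of_le_of_ne (Nat.le_of_dvd hposS (hdvd n)) (fun heq => ?_)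
    have hYdvd : addOrderOf (Y (a n)) ∣ a (n+1) := by
      rw [haS n]
      exact (Nat.dvd_lcm_right _ _).trans (Nat.dvd_lcm_right _ _)
    rw [← heq] at hYdvd
    exact hY (a n) hpos (addOrderOf_dvd_iff_nsmul_eq_zero.mp hYdvd)
  have harith : IsArithSeq a := ⟨ha0, strictMono_nat_of_lt_succ hlt, hdvd⟩
  -- the arithmetic type sequence
  refine ⟨a, Nat.nth (· ∈ DSet a), harith, e_arithType harith, ⟨2, e_ratio harith⟩, ?_⟩
  apply Set.eq_of_subset_of_subset
  · -- G ⊆ charSub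
    intro x hx
    have hx' : x ∈ Set.range g := by rw [← hg]; exact hx
    obtain ⟨n, rfl⟩ := hx'
    have hdvd' : addOrderOf (g n) ∣ a (n+1) := by
      rw [haS n]
      exact (Nat.dvd_lcm_left _ _).trans (Nat.dvd_lcm_right _ _)
    have hz : a (n+1) • g n = 0 := addOrderOf_dvd_iff_nsmul_eq_zero.mp hdvd'
    exact mem_charSub_of_ker harith (K := n+1) hz
  · -- charSub ⊆ G
    intro x hx
    obtain ⟨K, hK⟩ := charSub_sub_ker harith hx
    exact zmultiples_sub (hmain K).2 (ker_sub_zmultiples (hmain K).1 hK)
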